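/- Let b : ℝ^d → ℝ^d satisfy: (i) ⟨x−y, b(x)−b(y)⟩ ≤ 0 for all x, y; (ii) there exist κ, R > 0 such that ⟨x−y, b(x)−b(y)⟩ ≤ −κ|x−y|² whenever |x| ≥ R and |y| ≥ R; and (iii) b is continuous. Then there exist R̄ ≥ R and κ̄ ∈ (0, κ] such that for all x, y ∈ ℝ^d with |x| ≥ R̄, one has ⟨x−y, b(x)−b(y)⟩ ≤ −κ̄|x−y|². -/

import Mathlib

theorem stmt0 {d : ℕ} (b : EuclideanSpace ℝ (Fin d) → EuclideanSpace ℝ (Fin d))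
    (hb : Continuous b) (κ R : ℝ) (hκ : 0 < κ) (hR : 0 < R)
    (hdiss : ∀ x y : EuclideanSpace ℝ (Fin d), (inner ℝ (x - y) (b x - b y) : ℝ) ≤ 0)
    (hcontract : ∀ x y : EuclideanSpace ℝ (Fin d), R ≤ ‖x‖ → R ≤ ‖y‖ →
      (inner ℝ (x - y) (b x - b y) : ℝ) ≤ -κ * ‖x - y‖ ^ 2) :
    ∃ Rbar ≥ R, ∃ κbar ∈ Set.Ioc (0 : ℝ) κ, ∀ x y : EuclideanSpace ℝ (Fin d),
      Rbar ≤ ‖x‖ → (inner ℝ (x - y) (b x - b y) : ℝ) ≤ -κbar * ‖x - y‖ ^ 2 := by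
  refine ⟨3 * R, by linarith, κ / 2, ⟨by linarith, by linarith⟩, ?_⟩
  intro x y hx
  by_cases hy : R ≤ ‖y‖
  · have h := hcontract x y (by linarith) hy
    nlinarith [sq_nonneg ‖x - y‖]
  · push_neg at hy
    have hcont : Continuous fun t : ℝ => ‖y + t • (x - y)‖ :=
      (continuous_const.add (continuous_id.smul continuous_const)).norm
    have hg0 : ‖y + (0:ℝ) • (x - y)‖ = ‖y‖ := by simp
    have hg1 : ‖y + (1:ℝ) • (x - y)‖ = ‖x‖ := by simp
    have hmem : R ∈ Set.Ioo (‖y + (0:ℝ) • (x - y)‖) (‖y + (1:ℝ) • (x - y)‖) := by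
      rw [hg0, hg1]; exact ⟨hy, by linarith⟩
    obtain ⟨t, ht, hzR⟩ := intermediate_value_Ioo (zero_le_one) hcont.continuousOn hmem
    set z := y + t • (x - y) with hzdef
    have ht0 : (0 : ℝ) < t := ht.1
    have ht1 : t < 1 := ht.2
    have hzy : z - y = t • (x - y) := by rw [hzdef]; abel
    have hxz : x - z = (1 - t) • (x - y) := by
      rw [hzdef, sub_smul, one_smul]; abel
    have hxy1 : x - y = t⁻¹ • (z - y) := by
      rw [hzy, smul_smul, inv_mul_cancel₀ ht0.ne', one_smul]
    have hxy2 : x - y = (1 - t)⁻¹ • (x - z) := by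
      rw [hxz, smul_smul, inv_mul_cancel₀ (by linarith), one_smul]
    have h1t : (1:ℝ) - t ≠ 0 := by linarith
    have hzR' : ‖z‖ = R := hzR
    have h2 : (inner ℝ (x - y) (b z - b y) : ℝ) ≤ 0 := by
      conv_lhs => rw [hxy1]
      rw [real_inner_smul_left]
      exact mul_nonpos_of_nonneg_of_nonpos (by positivity) (hdiss z y)
    have hnz : ‖x - z‖ = (1 - t) * ‖x - y‖ := by
      rw [hxz, norm_smul, Real.norm_eq_abs, abs_of_pos (by linarith)]
    have h1 : (inner ℝ (x - y) (b x - b z) : ℝ) ≤ -κ * (1 - t) * ‖x - y‖ ^ 2 := by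
      have hc := hcontract x z (by linarith) (le_of_eq hzR'.symm)
      conv_lhs => rw [hxy2]
      rw [real_inner_smul_left]
      rw [hnz] at hc
      have hinv : (0:ℝ) < (1 - t)⁻¹ := by
        have : (0:ℝ) < 1 - t := by linarith
        positivity
      calc (1 - t)⁻¹ * (inner ℝ (x - z) (b x - b z) : ℝ)
          ≤ (1 - t)⁻¹ * (-κ * ((1 - t) * ‖x - y‖) ^ 2) :=
            mul_le_mul_of_nonneg_left hc hinv.le
        _ = -κ * (1 - t) * ‖x - y‖ ^ 2 := by
            field_simp
    have hsplit : (inner ℝ (x - y) (b x - b y) : ℝ)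
        = inner ℝ (x - y) (b x - b z) + inner ℝ (x - y) (b z - b y) := by
      have : b x - b y = (b x - b z) + (b z - b y) := by abel
      rw [this, inner_add_right]
    -- 1 - t ≥ 1/2
    have hnorm1 : ‖x‖ - R ≤ ‖x - z‖ := by
      have := norm_sub_norm_le x z
      rw [hzR'] at this; linarith
    have hnorm2 : ‖x - y‖ ≤ ‖x‖ + R := by
      have := norm_sub_le x y
      linarith
    have hxpos : (0:ℝ) < ‖x‖ := by linarith
    have hhalf : (1:ℝ)/2 ≤ 1 - t := by
      rw [hnz] at hnorm1
      nlinarith [norm_nonneg (x - y)]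
    rw [hsplit]
    nlinarith [h1, h2, mul_nonneg (mul_nonneg hκ.le (by linarith : (0:ℝ) ≤ 1 - t - 1/2)) (sq_nonneg ‖x - y‖)]
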